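/- arXiv:1810.04279 — 2 statements merged into one kernel-verified Lean document; each statement's English description precedes it below -/
import Mathlib

section
/- For every even number n ≥ 4, there exists an even permutation σ of {0,1}^n such that for all r_1, r_2, r_3 ∈ [n], all τ ∈ SC^{(r_1)}, and all π ∈ SC^{(r_2)}, the composition σ ∘ τ ∘ π is not an r_3-controlled permutation (i.e., σ ∘ τ ∘ π ∉ S^{(r_3)}). -/
open Equiv

/-- `x` with its `i`-th bit flipped. -/
def flipBit {n : ℕ} (i : Fin n) (x : Fin n → Bool) : Fin n → Bool :=
  Function.update x i (!x i)

/-- `SC i`: the set of `i`-concurrent controlled permutations (`i`-CCRBFs) of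
the hypercube `{0,1}^n`: the `i`-th bit of every point is preserved, and the
action on all other bits does not depend on the `i`-th bit. -/
def SC {n : ℕ} (i : Fin n) : Set (Perm (Fin n → Bool)) :=
  {σ | (∀ x, σ x i = x i) ∧ ∀ x, ∀ k, k ≠ i → σ x k = σ (flipBit i x) k}

/-- `AC i`: the set of concurrently even `i`-CCRBFs: those `σ ∈ SC i` whose
induced permutation of the face `{x | x i = false}` is even. -/
def AC {n : ℕ} (i : Fin n) : Set (Perm (Fin n → Bool)) :=
  {σ | σ ∈ SC i ∧ ∃ h : ∀ x : Fin n → Bool, x i = false ↔ σ x i = false,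
    Perm.sign (σ.subtypePerm (p := fun x => x i = false) (fun x => (h x).symm)) = 1}



/-! ### Auxiliary constructions for the witness permutation -/

/-- Booleans into `ZMod 2`. -/
def b2z : Bool → ZMod 2 := fun b => if b then 1 else 0

def Qtbl : Fin 12 → Fin 5 → Bool :=
  ![![false, false, false, false, false],
  ![true , false, false, false, true ],
  ![false, false, true , false, false],
  ![false, true , true , false, true ],
  ![false, false, false, true , false],
  ![true , true , false, true , false],
  ![false, true , false, false, false],
  ![false, true , true , true , true ],
  ![true , true , true , false, false],
  ![false, true , false, true , false],
  ![true , true , false, false, false],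
  ![true , false, true , true , false]]

/-- Pairing of the 12 patterns. -/
def mp : Fin 12 → Fin 12 := ![1, 0, 3, 2, 5, 4, 7, 6, 9, 8, 11, 10]

/-- Collapse `Fin n` onto `Fin 5`. -/
def emap (n : ℕ) : Fin n → Fin 5 := fun j => ⟨min j.1 4, by omega⟩

/-- The 12 special points of the hypercube. -/
def pt (n : ℕ) (i : Fin 12) : Fin n → Bool := fun j => Qtbl i (emap n j)

/-- The witness permutation: a product of six disjoint transpositions. -/
def sg (n : ℕ) : Perm (Fin n → Bool) :=
  Equiv.swap (pt n 0) (pt n 1) * Equiv.swap (pt n 2) (pt n 3) *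
  Equiv.swap (pt n 4) (pt n 5) * Equiv.swap (pt n 6) (pt n 7) *
  Equiv.swap (pt n 8) (pt n 9) * Equiv.swap (pt n 10) (pt n 11)

lemma pt_ne (n : ℕ) (hn : 4 ≤ n) : ∀ i j : Fin 12, i ≠ j → pt n i ≠ pt n j := by
  have key : ∀ i j : Fin 12, i ≠ j →
      ∃ k : Fin 4, Qtbl i (Fin.castSucc k) ≠ Qtbl j (Fin.castSucc k) := by decide
  intro i j hij h
  obtain ⟨k, hk⟩ := key i j hij
  apply hk
  have h4 : (k : ℕ) < n := by omega
  have hk2 : emap n ⟨(k : ℕ), h4⟩ = Fin.castSucc k := by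
    apply Fin.ext
    simp only [emap, Fin.castSucc, Fin.castAdd, Fin.castLE]
    omega
  have := congrFun h ⟨(k : ℕ), h4⟩
  simpa only [pt, hk2] using this

lemma flipBit_flip_flip {n : ℕ} (c : Fin n) (x : Fin n → Bool) : flipBit c (flipBit c x) = x := by
  funext j
  by_cases h : j = c
  · subst h; simp [flipBit]
  · simp [flipBit, Function.update_of_ne h]

lemma flip_ne {n : ℕ} (c : Fin n) (x : Fin n → Bool) : flipBit c x ≠ x := by
  intro h
  have := congrFun h c
  simp [flipBit] at this

lemma flip_noteq {n : ℕ} {c k : Fin n} (h : k ≠ c) (x : Fin n → Bool) :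
    flipBit c x k = x k := Function.update_of_ne h _ _

lemma zsum2 (n : ℕ) (hn : 4 ≤ n) (a b : Fin n) :
    ∑ x : Fin n → Bool, b2z (x a) * b2z (x b) = 0 := by
  obtain ⟨c, hca, hcb⟩ : ∃ c : Fin n, c ≠ a ∧ c ≠ b := by
    have h3 : ({a, b}ᶜ : Finset (Fin n)).Nonempty := by
      rw [← Finset.card_pos, Finset.card_compl]
      have h1 := Finset.card_insert_le a ({b} : Finset (Fin n))
      simp only [Finset.card_singleton] at h1
      simp only [Fintype.card_fin]
      omega
    obtain ⟨c, hc⟩ := h3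
    simp only [Finset.mem_compl, Finset.mem_insert, Finset.mem_singleton, not_or] at hc
    exact ⟨c, hc.1, hc.2⟩
  apply Finset.sum_ninvolution (flipBit c)
  · intro x
    rw [flip_noteq (Ne.symm hca), flip_noteq (Ne.symm hcb)]
    exact (by decide : ∀ u v : ZMod 2, u * v + u * v = 0) _ _
  · intro x _
    exact flip_ne c x
  · intro x; exact Finset.mem_univ _
  · intro x; exact flipBit_flip_flip c x

lemma sg_apply (n : ℕ) (hn : 4 ≤ n) : ∀ i : Fin 12, sg n (pt n i) = pt n (mp i) := by
  have hne := pt_ne n hn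
  intro i
  fin_cases i

  · show sg n (pt n 0) = pt n 1
    simp only [sg, Perm.mul_apply]
    rw [Equiv.swap_apply_of_ne_of_ne (hne 0 10 (by decide)) (hne 0 11 (by decide)),
      Equiv.swap_apply_of_ne_of_ne (hne 0 8 (by decide)) (hne 0 9 (by decide)),
      Equiv.swap_apply_of_ne_of_ne (hne 0 6 (by decide)) (hne 0 7 (by decide)),
      Equiv.swap_apply_of_ne_of_ne (hne 0 4 (by decide)) (hne 0 5 (by decide)),
      Equiv.swap_apply_of_ne_of_ne (hne 0 2 (by decide)) (hne 0 3 (by decide)),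
      Equiv.swap_apply_left]
  · show sg n (pt n 1) = pt n 0
    simp only [sg, Perm.mul_apply]
    rw [Equiv.swap_apply_of_ne_of_ne (hne 1 10 (by decide)) (hne 1 11 (by decide)),
      Equiv.swap_apply_of_ne_of_ne (hne 1 8 (by decide)) (hne 1 9 (by decide)),
      Equiv.swap_apply_of_ne_of_ne (hne 1 6 (by decide)) (hne 1 7 (by decide)),
      Equiv.swap_apply_of_ne_of_ne (hne 1 4 (by decide)) (hne 1 5 (by decide)),
      Equiv.swap_apply_of_ne_of_ne (hne 1 2 (by decide)) (hne 1 3 (by decide)),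
      Equiv.swap_apply_right]
  · show sg n (pt n 2) = pt n 3
    simp only [sg, Perm.mul_apply]
    rw [Equiv.swap_apply_of_ne_of_ne (hne 2 10 (by decide)) (hne 2 11 (by decide)),
      Equiv.swap_apply_of_ne_of_ne (hne 2 8 (by decide)) (hne 2 9 (by decide)),
      Equiv.swap_apply_of_ne_of_ne (hne 2 6 (by decide)) (hne 2 7 (by decide)),
      Equiv.swap_apply_of_ne_of_ne (hne 2 4 (by decide)) (hne 2 5 (by decide)),
      Equiv.swap_apply_left,
      Equiv.swap_apply_of_ne_of_ne (hne 3 0 (by decide)) (hne 3 1 (by decide))]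
  · show sg n (pt n 3) = pt n 2
    simp only [sg, Perm.mul_apply]
    rw [Equiv.swap_apply_of_ne_of_ne (hne 3 10 (by decide)) (hne 3 11 (by decide)),
      Equiv.swap_apply_of_ne_of_ne (hne 3 8 (by decide)) (hne 3 9 (by decide)),
      Equiv.swap_apply_of_ne_of_ne (hne 3 6 (by decide)) (hne 3 7 (by decide)),
      Equiv.swap_apply_of_ne_of_ne (hne 3 4 (by decide)) (hne 3 5 (by decide)),
      Equiv.swap_apply_right,
      Equiv.swap_apply_of_ne_of_ne (hne 2 0 (by decide)) (hne 2 1 (by decide))]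
  · show sg n (pt n 4) = pt n 5
    simp only [sg, Perm.mul_apply]
    rw [Equiv.swap_apply_of_ne_of_ne (hne 4 10 (by decide)) (hne 4 11 (by decide)),
      Equiv.swap_apply_of_ne_of_ne (hne 4 8 (by decide)) (hne 4 9 (by decide)),
      Equiv.swap_apply_of_ne_of_ne (hne 4 6 (by decide)) (hne 4 7 (by decide)),
      Equiv.swap_apply_left,
      Equiv.swap_apply_of_ne_of_ne (hne 5 2 (by decide)) (hne 5 3 (by decide)),
      Equiv.swap_apply_of_ne_of_ne (hne 5 0 (by decide)) (hne 5 1 (by decide))]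
  · show sg n (pt n 5) = pt n 4
    simp only [sg, Perm.mul_apply]
    rw [Equiv.swap_apply_of_ne_of_ne (hne 5 10 (by decide)) (hne 5 11 (by decide)),
      Equiv.swap_apply_of_ne_of_ne (hne 5 8 (by decide)) (hne 5 9 (by decide)),
      Equiv.swap_apply_of_ne_of_ne (hne 5 6 (by decide)) (hne 5 7 (by decide)),
      Equiv.swap_apply_right,
      Equiv.swap_apply_of_ne_of_ne (hne 4 2 (by decide)) (hne 4 3 (by decide)),
      Equiv.swap_apply_of_ne_of_ne (hne 4 0 (by decide)) (hne 4 1 (by decide))]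
  · show sg n (pt n 6) = pt n 7
    simp only [sg, Perm.mul_apply]
    rw [Equiv.swap_apply_of_ne_of_ne (hne 6 10 (by decide)) (hne 6 11 (by decide)),
      Equiv.swap_apply_of_ne_of_ne (hne 6 8 (by decide)) (hne 6 9 (by decide)),
      Equiv.swap_apply_left,
      Equiv.swap_apply_of_ne_of_ne (hne 7 4 (by decide)) (hne 7 5 (by decide)),
      Equiv.swap_apply_of_ne_of_ne (hne 7 2 (by decide)) (hne 7 3 (by decide)),
      Equiv.swap_apply_of_ne_of_ne (hne 7 0 (by decide)) (hne 7 1 (by decide))]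
  · show sg n (pt n 7) = pt n 6
    simp only [sg, Perm.mul_apply]
    rw [Equiv.swap_apply_of_ne_of_ne (hne 7 10 (by decide)) (hne 7 11 (by decide)),
      Equiv.swap_apply_of_ne_of_ne (hne 7 8 (by decide)) (hne 7 9 (by decide)),
      Equiv.swap_apply_right,
      Equiv.swap_apply_of_ne_of_ne (hne 6 4 (by decide)) (hne 6 5 (by decide)),
      Equiv.swap_apply_of_ne_of_ne (hne 6 2 (by decide)) (hne 6 3 (by decide)),
      Equiv.swap_apply_of_ne_of_ne (hne 6 0 (by decide)) (hne 6 1 (by decide))]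
  · show sg n (pt n 8) = pt n 9
    simp only [sg, Perm.mul_apply]
    rw [Equiv.swap_apply_of_ne_of_ne (hne 8 10 (by decide)) (hne 8 11 (by decide)),
      Equiv.swap_apply_left,
      Equiv.swap_apply_of_ne_of_ne (hne 9 6 (by decide)) (hne 9 7 (by decide)),
      Equiv.swap_apply_of_ne_of_ne (hne 9 4 (by decide)) (hne 9 5 (by decide)),
      Equiv.swap_apply_of_ne_of_ne (hne 9 2 (by decide)) (hne 9 3 (by decide)),
      Equiv.swap_apply_of_ne_of_ne (hne 9 0 (by decide)) (hne 9 1 (by decide))]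
  · show sg n (pt n 9) = pt n 8
    simp only [sg, Perm.mul_apply]
    rw [Equiv.swap_apply_of_ne_of_ne (hne 9 10 (by decide)) (hne 9 11 (by decide)),
      Equiv.swap_apply_right,
      Equiv.swap_apply_of_ne_of_ne (hne 8 6 (by decide)) (hne 8 7 (by decide)),
      Equiv.swap_apply_of_ne_of_ne (hne 8 4 (by decide)) (hne 8 5 (by decide)),
      Equiv.swap_apply_of_ne_of_ne (hne 8 2 (by decide)) (hne 8 3 (by decide)),
      Equiv.swap_apply_of_ne_of_ne (hne 8 0 (by decide)) (hne 8 1 (by decide))]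
  · show sg n (pt n 10) = pt n 11
    simp only [sg, Perm.mul_apply]
    rw [Equiv.swap_apply_left,
      Equiv.swap_apply_of_ne_of_ne (hne 11 8 (by decide)) (hne 11 9 (by decide)),
      Equiv.swap_apply_of_ne_of_ne (hne 11 6 (by decide)) (hne 11 7 (by decide)),
      Equiv.swap_apply_of_ne_of_ne (hne 11 4 (by decide)) (hne 11 5 (by decide)),
      Equiv.swap_apply_of_ne_of_ne (hne 11 2 (by decide)) (hne 11 3 (by decide)),
      Equiv.swap_apply_of_ne_of_ne (hne 11 0 (by decide)) (hne 11 1 (by decide))]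
  · show sg n (pt n 11) = pt n 10
    simp only [sg, Perm.mul_apply]
    rw [Equiv.swap_apply_right,
      Equiv.swap_apply_of_ne_of_ne (hne 10 8 (by decide)) (hne 10 9 (by decide)),
      Equiv.swap_apply_of_ne_of_ne (hne 10 6 (by decide)) (hne 10 7 (by decide)),
      Equiv.swap_apply_of_ne_of_ne (hne 10 4 (by decide)) (hne 10 5 (by decide)),
      Equiv.swap_apply_of_ne_of_ne (hne 10 2 (by decide)) (hne 10 3 (by decide)),
      Equiv.swap_apply_of_ne_of_ne (hne 10 0 (by decide)) (hne 10 1 (by decide))]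

lemma sg_fix (n : ℕ) (x : Fin n → Bool) (hx : ∀ i : Fin 12, x ≠ pt n i) : sg n x = x := by
  simp only [sg, Perm.mul_apply]
  rw [Equiv.swap_apply_of_ne_of_ne (hx 10) (hx 11),
    Equiv.swap_apply_of_ne_of_ne (hx 8) (hx 9),
    Equiv.swap_apply_of_ne_of_ne (hx 6) (hx 7),
    Equiv.swap_apply_of_ne_of_ne (hx 4) (hx 5),
    Equiv.swap_apply_of_ne_of_ne (hx 2) (hx 3),
    Equiv.swap_apply_of_ne_of_ne (hx 0) (hx 1)]

lemma sg_sign (n : ℕ) (hn : 4 ≤ n) : Perm.sign (sg n) = 1 := by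
  have h := pt_ne n hn
  simp only [sg, map_mul,
    Perm.sign_swap (h 0 1 (by decide)), Perm.sign_swap (h 2 3 (by decide)),
    Perm.sign_swap (h 4 5 (by decide)), Perm.sign_swap (h 6 7 (by decide)),
    Perm.sign_swap (h 8 9 (by decide)), Perm.sign_swap (h 10 11 (by decide))]
  norm_num

lemma keyfin : ∀ a b : Fin 5,
    ∑ i : Fin 12, b2z (Qtbl i a) * (b2z (Qtbl (mp i) b) + b2z (Qtbl i b)) = 1 := by decide

lemma keysum (n : ℕ) (hn : 4 ≤ n) (r c : Fin n) :
    ∑ x : Fin n → Bool, b2z (x r) * b2z (sg n x c) = 1 := by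
  have step : ∀ x : Fin n → Bool, b2z (x r) * b2z (sg n x c)
      = b2z (x r) * b2z (x c) + b2z (x r) * (b2z (sg n x c) + b2z (x c)) :=
    fun x => (by decide : ∀ A B C : ZMod 2, A * C = A * B + A * (C + B)) _ _ _
  rw [Finset.sum_congr rfl (fun x _ => step x), Finset.sum_add_distrib, zsum2 n hn r c,
    zero_add]
  rw [← Finset.sum_subset
    (Finset.subset_univ ((Finset.univ : Finset (Fin 12)).image (pt n)))
    (fun x _ hx => by
      have hfix : sg n x = x := sg_fix n x (fun i he =>
        hx (Finset.mem_image.mpr ⟨i, Finset.mem_univ i, he.symm⟩))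
      rw [hfix]
      exact (by decide : ∀ A B : ZMod 2, A * (B + B) = 0) _ _)]
  rw [Finset.sum_image (fun x _ y _ hxy => by
    by_contra hne
    exact pt_ne n hn x y hne hxy)]
  calc ∑ i : Fin 12, b2z (pt n i r) * (b2z (sg n (pt n i) c) + b2z (pt n i c))
      = ∑ i : Fin 12, b2z (Qtbl i (emap n r)) *
          (b2z (Qtbl (mp i) (emap n c)) + b2z (Qtbl i (emap n c))) :=
        Finset.sum_congr rfl (fun i _ => by rw [sg_apply n hn i]; rfl)
    _ = 1 := keyfin (emap n r) (emap n c)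


/-- Tightness of three blocks: for every even `n ≥ 4` there is an even
permutation of `{0,1}^n` that no two concurrent controlled blocks can turn
into a controlled permutation. -/
theorem three_blocks_tight (n : ℕ) (hn : 4 ≤ n) (hpar : Even n) :
    ∃ σ : Perm (Fin n → Bool), Perm.sign σ = 1 ∧
      ∀ (r1 r2 r3 : Fin n), ∀ τ ∈ SC r1, ∀ π ∈ SC r2,
        ¬ (∀ x, (σ * τ * π) x r3 = x r3) := by
  refine ⟨sg n, sg_sign n hn, ?_⟩
  rintro r1 r2 r3 τ ⟨hτ1, hτ2⟩ π ⟨hπ1, hπ2⟩ H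
  have hT1 : ∑ x : Fin n → Bool, b2z (x r1) * b2z (sg n x r3) = 1 := keysum n hn r1 r3
  have hT0 : ∑ x : Fin n → Bool, b2z (x r1) * b2z (sg n x r3) = 0 := by
    have hre : ∑ x : Fin n → Bool, b2z (x r1) * b2z (sg n x r3)
        = ∑ y : Fin n → Bool, b2z (π y r1) * b2z (y r3) := by
      rw [← Equiv.sum_comp (π.trans τ) (fun x => b2z (x r1) * b2z (sg n x r3))]
      refine Finset.sum_congr rfl (fun y _ => ?_)
      have h1 : (π.trans τ) y = τ (π y) := rfl
      have h2 : sg n (τ (π y)) r3 = y r3 := by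
        have := H y
        simpa only [Perm.mul_apply] using this
      rw [h1, hτ1 (π y), h2]
    rw [hre]
    by_cases h21 : r2 = r1
    · subst h21
      simp only [hπ1]
      exact zsum2 n hn r2 r3
    · by_cases h23 : r2 = r3
      · subst h23
        rw [← Equiv.sum_comp π.symm (fun y => b2z (π y r1) * b2z (y r2))]
        refine Eq.trans (Finset.sum_congr rfl (fun z _ => ?_)) (zsum2 n hn r1 r2)
        have h4 : π (π.symm z) = z := π.apply_symm_apply z
        have h5 : π.symm z r2 = z r2 := by
          have := hπ1 (π.symm z)
          rw [h4] at this
          exact this.symm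
        simp only [h4, h5]
      · apply Finset.sum_ninvolution (flipBit r2)
        · intro y
          have e1 : π (flipBit r2 y) r1 = π y r1 := (hπ2 y r1 (fun h => h21 h.symm)).symm
          have e2 : flipBit r2 y r3 = y r3 := flip_noteq (fun h => h23 h.symm) y
          rw [e1, e2]
          exact (by decide : ∀ u v : ZMod 2, u * v + u * v = 0) _ _
        · intro y _
          exact flip_ne r2 y
        · intro y; exact Finset.mem_univ _
        · intro y; exact flipBit_flip_flip r2 y
  rw [hT1] at hT0
  exact absurd hT0 (by decide)
end

section
/- Let n ≥ 4, let r_1 ∈ [n], and let σ be an even permutation of {0,1}^n. Then there exist at least n−2 different indices r_2 ∈ [n]\{r_1} for which there exist σ_1 ∈ AC^{(r_1)} and π_1, π_2 ∈ AC^{(r_2)} such that σ ∘ π_1 ∘ σ_1 ∘ π_2 ∈ A^{(r_1)}. -/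
open Equiv

open Equiv Finset

variable {α κ : Type*}

/-- count of a fiber -/
def cnt [Fintype α] [DecidableEq κ] (f : α → κ) (v : κ) : ℕ :=
  (Finset.univ.filter fun a => f a = v).card

theorem cnt_eq_card_subtype [Fintype α] [DecidableEq κ] (f : α → κ) (v : κ) :
    cnt f v = Fintype.card {a // f a = v} := by
  rw [Fintype.card_subtype]; rfl

/-- L1: equal fiber counts gives a permutation intertwining two functions. -/
theorem exists_perm_comp [Fintype α] [DecidableEq α] [DecidableEq κ] (f g : α → κ)
    (h : ∀ v, cnt f v = cnt g v) : ∃ e : Equiv.Perm α, ∀ a, g (e a) = f a := by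
  have hcard : ∀ v, Fintype.card {a // f a = v} = Fintype.card {a // g a = v} := by
    intro v; rw [← cnt_eq_card_subtype, ← cnt_eq_card_subtype]; exact h v
  refine ⟨(Equiv.sigmaFiberEquiv f).symm.trans
    ((Equiv.sigmaCongrRight fun v => Fintype.equivOfCardEq (hcard v)).trans
      (Equiv.sigmaFiberEquiv g)), fun a => ?_⟩
  have h1 : (Equiv.sigmaFiberEquiv f).symm a = ⟨f a, a, rfl⟩ := by
    rw [Equiv.symm_apply_eq]; rfl
  simp only [Equiv.trans_apply, h1]
  exact ((Fintype.equivOfCardEq (hcard (f a))) ⟨a, rfl⟩).2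

theorem sign_eq_one_or {β : Type*} [DecidableEq β] [Fintype β] (e : Perm β) :
    Perm.sign e = 1 ∨ Perm.sign e = -1 := Int.units_eq_one_or _

/-- L1 with even sign. -/
theorem exists_even_perm_comp [Fintype α] [DecidableEq α] [DecidableEq κ] [Fintype κ]
    (f g : α → κ) (h : ∀ v, cnt f v = cnt g v)
    (hlt : Fintype.card κ < Fintype.card α) :
    ∃ e : Equiv.Perm α, Perm.sign e = 1 ∧ ∀ a, g (e a) = f a := by
  obtain ⟨e, he⟩ := exists_perm_comp f g h
  obtain ⟨a₁, a₂, hne, hfa⟩ := Fintype.exists_ne_map_eq_of_card_lt f hlt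
  rcases sign_eq_one_or e with hs | hs
  · exact ⟨e, hs, he⟩
  · refine ⟨e * Equiv.swap a₁ a₂, ?_, fun a => ?_⟩
    · rw [Perm.sign_mul, hs, Perm.sign_swap hne]; norm_num
    · have hsw : f (Equiv.swap a₁ a₂ a) = f a := by
        rcases eq_or_ne a a₁ with rfl | h1
        · rw [Equiv.swap_apply_left]; exact hfa.symm
        rcases eq_or_ne a a₂ with rfl | h2
        · rw [Equiv.swap_apply_right]; exact hfa
        · rw [Equiv.swap_apply_of_ne_of_ne h1 h2]
      simpa [Perm.mul_apply, he] using hsw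

/-- helper equiv for L2 -/
def sigmaFstFiber {κ : Type*} [DecidableEq κ] (β : κ → Type*) (v : κ) :
    {s : Σ u : κ, β u // s.1 = v} ≃ β v where
  toFun s := s.2 ▸ s.1.2
  invFun b := ⟨⟨v, b⟩, rfl⟩
  left_inv := by rintro ⟨⟨v', b⟩, rfl⟩; rfl
  right_inv b := rfl

/-- L2: functions with prescribed fiber counts exist. -/
theorem exists_fun_cnt [Fintype α] [DecidableEq α] [DecidableEq κ] [Fintype κ]
    (d : κ → ℕ) (h : ∑ v : κ, d v = Fintype.card α) :
    ∃ f : α → κ, ∀ v, cnt f v = d v := by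
  have hc : Fintype.card α = Fintype.card (Σ v : κ, Fin (d v)) := by
    simp [Fintype.card_sigma, h]
  refine ⟨fun a => (Fintype.equivOfCardEq hc a).1, fun v => ?_⟩
  rw [cnt_eq_card_subtype]
  have e1 : {a // (Fintype.equivOfCardEq hc a).1 = v} ≃
      {s : Σ u : κ, Fin (d u) // s.1 = v} :=
    (Fintype.equivOfCardEq hc).subtypeEquiv fun a => Iff.rfl
  rw [Fintype.card_congr (e1.trans (sigmaFstFiber _ v))]
  simp

/-- L3: fibers of a composition. -/
theorem cnt_comp [Fintype α] [DecidableEq κ] [DecidableEq α] {κ' : Type*} [DecidableEq κ'] [Fintype κ]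
    (f : α → κ) (g : κ → κ') (p : κ') :
    cnt (fun a => g (f a)) p = ∑ v ∈ Finset.univ.filter (fun v => g v = p), cnt f v := by
  unfold cnt
  rw [Finset.card_eq_sum_card_fiberwise
    (f := f) (t := Finset.univ.filter fun v => g v = p) (fun a ha => by
      simp only [Finset.mem_coe, Finset.mem_filter, Finset.mem_univ, true_and] at ha ⊢; exact ha)]
  refine Finset.sum_congr rfl fun v hv => ?_
  simp only [Finset.mem_filter, Finset.mem_univ, true_and] at hv
  congr 1
  ext a
  simp only [Finset.mem_filter, Finset.mem_univ, true_and]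
  exact ⟨fun h => h.2, fun h => ⟨by rw [h, hv], h⟩⟩

/-- counts transfer along an equiv -/
theorem cnt_equiv {β : Type*} [Fintype α] [Fintype β] [DecidableEq κ]
    (E : α ≃ β) (f : β → κ) (v : κ) : cnt (fun a => f (E a)) v = cnt f v := by
  rw [cnt_eq_card_subtype, cnt_eq_card_subtype]
  exact Fintype.card_congr (E.subtypeEquiv fun a => Iff.rfl)

theorem cnt_congr [Fintype α] [DecidableEq κ] (f g : α → κ) (h : ∀ a, f a = g a) (v : κ) :
    cnt f v = cnt g v := by
  unfold cnt; congr 1; ext a; simp [h a]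

/-- sum of all fiber counts -/
theorem sum_cnt [Fintype α] [DecidableEq κ] [Fintype κ] (f : α → κ) :
    ∑ v : κ, cnt f v = Fintype.card α := by
  unfold cnt
  rw [← Finset.card_eq_sum_card_fiberwise (fun a _ => Finset.mem_univ (f a))]
  exact Finset.card_univ

/-- counts over a product with Bool, choosing by the bool -/
def condProdEquiv {Z κ : Type*} [DecidableEq κ] (A B : Z → κ) (v : κ) :
    {p : Z × Bool // (cond p.2 (B p.1) (A p.1)) = v} ≃ {z // A z = v} ⊕ {z // B z = v} where
  toFun p := match p with
    | ⟨(z, false), h⟩ => Sum.inl ⟨z, h⟩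
    | ⟨(z, true), h⟩ => Sum.inr ⟨z, h⟩
  invFun s := match s with
    | Sum.inl ⟨z, h⟩ => ⟨(z, false), h⟩
    | Sum.inr ⟨z, h⟩ => ⟨(z, true), h⟩
  left_inv := by rintro ⟨⟨z, _ | _⟩, h⟩ <;> rfl
  right_inv := by rintro (⟨z, h⟩ | ⟨z, h⟩) <;> rfl

theorem cnt_cond_prod {Z : Type*} [Fintype Z] [DecidableEq κ] (A B : Z → κ) (v : κ) :
    cnt (fun p : Z × Bool => cond p.2 (B p.1) (A p.1)) v = cnt A v + cnt B v := by
  rw [cnt_eq_card_subtype, cnt_eq_card_subtype, cnt_eq_card_subtype,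
    Fintype.card_congr (condProdEquiv A B v)]
  simp

theorem cnt_fst_prod {Z : Type*} [Fintype Z] [DecidableEq κ] (t : Z → κ) (v : κ) :
    cnt (fun p : Z × Bool => t p.1) v = 2 * cnt t v := by
  have : cnt (fun p : Z × Bool => cond p.2 (t p.1) (t p.1)) v = cnt t v + cnt t v :=
    cnt_cond_prod t t v
  rw [two_mul, ← this]
  exact cnt_congr _ _ (fun p => by rcases p with ⟨z, _ | _⟩ <;> rfl) v

namespace HC
variable {n : ℕ}

abbrev X (n : ℕ) := Fin n → Bool

theorem upd_self {x : X n} {k : Fin n} (h : x k = false) :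
    Function.update x k false = x := Function.update_eq_self_iff.mpr h.symm

abbrev face (k : Fin n) := {x : X n // x k = false}

def proj (k : Fin n) (x : X n) : face k := ⟨Function.update x k false, Function.update_self _ _ _⟩

@[simp] theorem proj_val_apply_ne (k k' : Fin n) (x : X n) (h : k' ≠ k) :
    (proj k x).val k' = x k' := Function.update_of_ne h _ _

theorem proj_of_face (k : Fin n) (w : face k) : proj k w.val = w :=
  Subtype.ext (upd_self w.2)

def lift (k : Fin n) (e : Perm (face k)) : Perm (X n) where
  toFun x := Function.update (e (proj k x)).val k (x k)
  invFun x := Function.update (e.symm (proj k x)).val k (x k)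
  left_inv := by
    intro x
    dsimp only
    have h1 : proj k (Function.update (e (proj k x)).val k (x k)) = e (proj k x) :=
      Subtype.ext (by simp only [proj, Function.update_idem]; exact upd_self (e (proj k x)).2)
    rw [h1, Equiv.symm_apply_apply, Function.update_self]
    simp only [proj, Function.update_idem, Function.update_eq_self]
  right_inv := by
    intro x
    dsimp only
    have h1 : proj k (Function.update (e.symm (proj k x)).val k (x k)) = e.symm (proj k x) :=
      Subtype.ext (by simp only [proj, Function.update_idem]; exact upd_self (e.symm (proj k x)).2)
    rw [h1, Equiv.apply_symm_apply, Function.update_self]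
    simp only [proj, Function.update_idem, Function.update_eq_self]

theorem lift_apply (k : Fin n) (e : Perm (face k)) (x : X n) :
    lift k e x = Function.update (e (proj k x)).val k (x k) := rfl

@[simp] theorem lift_apply_self (k : Fin n) (e : Perm (face k)) (x : X n) :
    lift k e x k = x k := Function.update_self _ _ _

theorem lift_apply_ne (k : Fin n) (e : Perm (face k)) (x : X n) (k' : Fin n) (h : k' ≠ k) :
    lift k e x k' = (e (proj k x)).val k' := Function.update_of_ne h _ _

theorem proj_lift (k : Fin n) (e : Perm (face k)) (x : X n) :
    proj k (lift k e x) = e (proj k x) := by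
  apply Subtype.ext
  simp only [lift_apply, proj, Function.update_idem]
  exact upd_self (e (proj k x)).2

theorem lift_mem_SC (k : Fin n) (e : Perm (face k)) : lift k e ∈ SC k := by
  constructor
  · intro x; exact lift_apply_self k e x
  · intro x k' hk'
    have hproj : proj k (flipBit k x) = proj k x := by
      apply Subtype.ext
      simp only [proj, flipBit, Function.update_idem]
    rw [lift_apply_ne k e x k' hk', lift_apply_ne k e _ k' hk', hproj]

theorem lift_subtypePerm (k : Fin n) (e : Perm (face k))
    (h : ∀ x : X n, x k = false ↔ (lift k e) x k = false) :
    (lift k e).subtypePerm (p := fun x => x k = false) (fun x => (h x).symm) = e := by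
  apply Equiv.ext
  intro w
  apply Subtype.ext
  show (lift k e) w.val = (e w).val
  rw [lift_apply, proj_of_face, w.2]
  exact upd_self (e w).2

def faceEquiv (k : Fin n) : X n ≃ Bool × face k where
  toFun x := (x k, proj k x)
  invFun p := Function.update p.2.val k p.1
  left_inv x := by simp only [proj, Function.update_idem, Function.update_eq_self]
  right_inv p := by
    obtain ⟨b, w⟩ := p
    simp only [Prod.mk.injEq]
    refine ⟨Function.update_self _ _ _, Subtype.ext ?_⟩
    simp only [proj, Function.update_idem]
    exact upd_self w.2

theorem lift_eq_permCongr (k : Fin n) (e : Perm (face k)) :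
    lift k e = (faceEquiv k).symm.permCongr
      ((Perm.prodExtendRight false e) * (Perm.prodExtendRight true e)) := by
  apply Equiv.ext
  intro x
  simp only [Equiv.permCongr_apply, Equiv.symm_symm]
  have h2 : ((Perm.prodExtendRight false e) * (Perm.prodExtendRight true e)) (faceEquiv k x)
      = (x k, e (proj k x)) := by
    rw [show faceEquiv k x = (x k, proj k x) from rfl, Perm.mul_apply]
    rcases Bool.dichotomy (x k) with hb | hb <;> rw [hb]
    · rw [Perm.prodExtendRight_apply_ne e (show (false : Bool) ≠ true by decide) (proj k x),
        Perm.prodExtendRight_apply_eq]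
    · rw [Perm.prodExtendRight_apply_eq,
        Perm.prodExtendRight_apply_ne e (show (true : Bool) ≠ false by decide) (e (proj k x))]
  rw [h2]
  rfl

theorem sign_lift (k : Fin n) (e : Perm (face k)) : Perm.sign (lift k e) = 1 := by
  rw [lift_eq_permCongr, Perm.sign_permCongr, Perm.sign_mul,
    Perm.sign_prodExtendRight, Perm.sign_prodExtendRight]
  exact Int.units_mul_self _

theorem lift_mem_AC (k : Fin n) (e : Perm (face k)) (he : Perm.sign e = 1) :
    lift k e ∈ AC k := by
  refine ⟨lift_mem_SC k e, ⟨fun x => by rw [lift_apply_self], ?_⟩⟩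
  rw [lift_subtypePerm k e (fun x => by rw [lift_apply_self])]
  exact he

end HC

open Finset

namespace HC

abbrev K2 := Bool × Bool

def nn (s n0 n1 : ℕ) : K2 → ℕ
  | (false, false) => s
  | (true, false) => n0
  | (false, true) => n1
  | (true, true) => s

set_option maxHeartbeats 1000000 in
theorem numeric_core (m s n0 n1 : ℕ) (hm : 4 ≤ m) (hme : m % 2 = 0)
    (hsum : s + s + n0 + n1 = 2 * m)
    (hb1 : ¬(s = 0 ∧ n0 % 2 = 1)) (hb2 : ¬(s = 1 ∧ (n0 = 0 ∨ n1 = 0))) :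
    ∃ (c : K2 × K2 → ℕ) (d : K2 → ℕ),
      (∑ vu : K2 × K2, c vu = m) ∧
      (∀ v, (∑ vu ∈ univ.filter (fun vu : K2 × K2 => vu.1 = v), c vu)
          + (∑ vu ∈ univ.filter (fun vu : K2 × K2 => vu.2 = v), c vu) = nn s n0 n1 v) ∧
      (∀ p, (∑ vu ∈ univ.filter (fun vu : K2 × K2 => (vu.1.1, vu.2.1) = p), c vu)
          + (∑ vu ∈ univ.filter (fun vu : K2 × K2 => (vu.1.2, vu.2.2) = p), c vu) = 2 * d p) ∧
      ((∑ p ∈ univ.filter (fun p : K2 => p.1 = true), d p)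
          + (∑ p ∈ univ.filter (fun p : K2 => p.2 = true), d p) = m) ∧
      (∑ p : K2, d p = m) := by
  rcases Nat.mod_two_eq_zero_or_one s with hs | hs <;> rcases Nat.mod_two_eq_zero_or_one n0 with h0 | h0
  · -- C1 : s even, n0 even (hence n1 even)
    obtain ⟨k, hk⟩ : ∃ k, s = k + k := ⟨s / 2, by omega⟩
    obtain ⟨a, ha⟩ : ∃ a, n0 = a + a := ⟨n0 / 2, by omega⟩
    obtain ⟨b, hb⟩ : ∃ b, n1 = b + b := ⟨n1 / 2, by omega⟩
    obtain ⟨q, hq⟩ : ∃ q, a + b = 2 * q := ⟨(a + b) / 2, by omega⟩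
    refine ⟨(fun vu => match vu with
      | ((false,false),(false,false)) => k
      | ((true,false),(true,false)) => a
      | ((false,true),(false,true)) => b
      | ((true,true),(true,true)) => k
      | _ => 0),
      (fun p => match p with
      | (false,false) => k + q
      | (true,false) => 0
      | (false,true) => 0
      | (true,true) => k + q), ?_, ?_, ?_, ?_, ?_⟩
    · simp only [Fintype.sum_prod_type, Fintype.sum_bool]; omega
    · rintro ⟨v1, v2⟩
      cases v1 <;> cases v2 <;>
        (simp only [Finset.sum_filter, Fintype.sum_prod_type, Fintype.sum_bool, nn]
         norm_num; try omega)
    · rintro ⟨p1, p2⟩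
      cases p1 <;> cases p2 <;>
        (simp only [Finset.sum_filter, Fintype.sum_prod_type, Fintype.sum_bool]
         norm_num; try omega)
    · simp only [Finset.sum_filter, Fintype.sum_prod_type, Fintype.sum_bool]
      norm_num; try omega
    · simp only [Fintype.sum_prod_type, Fintype.sum_bool]; omega
  · -- C3 : s even (≥ 2 as s = 0 is excluded), n0 odd, n1 odd
    have hs0 : s ≠ 0 := by rintro rfl; exact hb1 ⟨rfl, h0⟩
    obtain ⟨k, hk⟩ : ∃ k, s = 2 * k + 2 := ⟨(s - 2) / 2, by omega⟩
    obtain ⟨a, ha⟩ : ∃ a, n0 = 2 * a + 1 := ⟨n0 / 2, by omega⟩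
    obtain ⟨b, hb⟩ : ∃ b, n1 = 2 * b + 1 := ⟨n1 / 2, by omega⟩
    obtain ⟨q, hq⟩ : ∃ q, a + b = 2 * q + 1 := ⟨(a + b - 1) / 2, by omega⟩
    refine ⟨(fun vu => match vu with
      | ((false,false),(true,false)) => 1
      | ((false,true),(true,true)) => 1
      | ((false,false),(true,true)) => 1
      | ((false,false),(false,false)) => k
      | ((true,true),(true,true)) => k
      | ((true,false),(true,false)) => a
      | ((false,true),(false,true)) => b
      | _ => 0),
      (fun p => match p with
      | (false,false) => k + 1 + q
      | (true,false) => 0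
      | (false,true) => 2
      | (true,true) => k + 1 + q), ?_, ?_, ?_, ?_, ?_⟩
    · simp only [Fintype.sum_prod_type, Fintype.sum_bool]; omega
    · rintro ⟨v1, v2⟩
      cases v1 <;> cases v2 <;>
        (simp only [Finset.sum_filter, Fintype.sum_prod_type, Fintype.sum_bool, nn]
         norm_num; try omega)
    · rintro ⟨p1, p2⟩
      cases p1 <;> cases p2 <;>
        (simp only [Finset.sum_filter, Fintype.sum_prod_type, Fintype.sum_bool]
         norm_num; try omega)
    · simp only [Finset.sum_filter, Fintype.sum_prod_type, Fintype.sum_bool]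
      norm_num; try omega
    · simp only [Fintype.sum_prod_type, Fintype.sum_bool]; omega
  · -- s odd, n0 even (hence n1 even)
    rcases eq_or_ne n0 0 with rfl | h0ne
    · -- C2b : n0 = 0 ⇒ n1 ≥ 2, s ≥ 3
      have hn1 : n1 ≠ 0 := by rintro rfl; omega
      have hs3 : 3 ≤ s := by
        rcases eq_or_ne s 1 with rfl | h
        · exact absurd ⟨rfl, Or.inl rfl⟩ hb2
        · omega
      obtain ⟨k, hk⟩ : ∃ k, s = 2 * k + 3 := ⟨(s - 3) / 2, by omega⟩
      obtain ⟨b, hb⟩ : ∃ b, n1 = 2 * b + 2 := ⟨(n1 - 2) / 2, by omega⟩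
      obtain ⟨q, hq⟩ : ∃ q, b = 2 * q := ⟨b / 2, by omega⟩
      refine ⟨(fun vu => match vu with
        | ((false,false),(false,true)) => 2
        | ((false,false),(true,true)) => 1
        | ((false,false),(false,false)) => k
        | ((true,true),(true,true)) => k + 1
        | ((false,true),(false,true)) => b
        | _ => 0),
        (fun p => match p with
        | (false,false) => k + 1 + q
        | (true,false) => 0
        | (false,true) => 2
        | (true,true) => k + 1 + q), ?_, ?_, ?_, ?_, ?_⟩
      · simp only [Fintype.sum_prod_type, Fintype.sum_bool]; omega
      · rintro ⟨v1, v2⟩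
        cases v1 <;> cases v2 <;>
          (simp only [Finset.sum_filter, Fintype.sum_prod_type, Fintype.sum_bool, nn]
           norm_num; try omega)
      · rintro ⟨p1, p2⟩
        cases p1 <;> cases p2 <;>
          (simp only [Finset.sum_filter, Fintype.sum_prod_type, Fintype.sum_bool]
           norm_num; try omega)
      · simp only [Finset.sum_filter, Fintype.sum_prod_type, Fintype.sum_bool]
        norm_num; try omega
      · simp only [Fintype.sum_prod_type, Fintype.sum_bool]; omega
    rcases eq_or_ne n1 0 with rfl | h1ne
    · -- C2a : n1 = 0 ⇒ n0 ≥ 2, s ≥ 3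
      have hs3 : 3 ≤ s := by
        rcases eq_or_ne s 1 with rfl | h
        · exact absurd ⟨rfl, Or.inr rfl⟩ hb2
        · omega
      obtain ⟨k, hk⟩ : ∃ k, s = 2 * k + 3 := ⟨(s - 3) / 2, by omega⟩
      obtain ⟨a, ha⟩ : ∃ a, n0 = 2 * a + 2 := ⟨(n0 - 2) / 2, by omega⟩
      obtain ⟨q, hq⟩ : ∃ q, a = 2 * q := ⟨a / 2, by omega⟩
      refine ⟨(fun vu => match vu with
        | ((false,false),(true,false)) => 2
        | ((false,false),(true,true)) => 1
        | ((false,false),(false,false)) => k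
        | ((true,true),(true,true)) => k + 1
        | ((true,false),(true,false)) => a
        | _ => 0),
        (fun p => match p with
        | (false,false) => k + 1 + q
        | (true,false) => 0
        | (false,true) => 2
        | (true,true) => k + 1 + q), ?_, ?_, ?_, ?_, ?_⟩
      · simp only [Fintype.sum_prod_type, Fintype.sum_bool]; omega
      · rintro ⟨v1, v2⟩
        cases v1 <;> cases v2 <;>
          (simp only [Finset.sum_filter, Fintype.sum_prod_type, Fintype.sum_bool, nn]
           norm_num; try omega)
      · rintro ⟨p1, p2⟩
        cases p1 <;> cases p2 <;>
          (simp only [Finset.sum_filter, Fintype.sum_prod_type, Fintype.sum_bool]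
           norm_num; try omega)
      · simp only [Finset.sum_filter, Fintype.sum_prod_type, Fintype.sum_bool]
        norm_num; try omega
      · simp only [Fintype.sum_prod_type, Fintype.sum_bool]; omega
    · -- C2 : n0 ≥ 2, n1 ≥ 2
      obtain ⟨k, hk⟩ : ∃ k, s = 2 * k + 1 := ⟨s / 2, by omega⟩
      obtain ⟨a, ha⟩ : ∃ a, n0 = 2 * a + 2 := ⟨(n0 - 2) / 2, by omega⟩
      obtain ⟨b, hb⟩ : ∃ b, n1 = 2 * b + 2 := ⟨(n1 - 2) / 2, by omega⟩
      obtain ⟨q, hq⟩ : ∃ q, a + b = 2 * q + 1 := ⟨(a + b - 1) / 2, by omega⟩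
      refine ⟨(fun vu => match vu with
        | ((false,false),(true,false)) => 1
        | ((true,false),(false,true)) => 1
        | ((true,true),(false,true)) => 1
        | ((false,false),(false,false)) => k
        | ((true,true),(true,true)) => k
        | ((true,false),(true,false)) => a
        | ((false,true),(false,true)) => b
        | _ => 0),
        (fun p => match p with
        | (false,false) => k + q + 1
        | (true,false) => 1
        | (false,true) => 1
        | (true,true) => k + q + 1), ?_, ?_, ?_, ?_, ?_⟩
      · simp only [Fintype.sum_prod_type, Fintype.sum_bool]; omega
      · rintro ⟨v1, v2⟩
        cases v1 <;> cases v2 <;>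
          (simp only [Finset.sum_filter, Fintype.sum_prod_type, Fintype.sum_bool, nn]
           norm_num; try omega)
      · rintro ⟨p1, p2⟩
        cases p1 <;> cases p2 <;>
          (simp only [Finset.sum_filter, Fintype.sum_prod_type, Fintype.sum_bool]
           norm_num; try omega)
      · simp only [Finset.sum_filter, Fintype.sum_prod_type, Fintype.sum_bool]
        norm_num; try omega
      · simp only [Fintype.sum_prod_type, Fintype.sum_bool]; omega
  · -- s odd, n0 odd, n1 odd
    rcases Nat.lt_or_ge s 3 with hslt | hs3
    · -- s = 1
      have hs1 : s = 1 := by omega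
      rcases Nat.lt_or_ge n1 3 with h1lt | h1ge
      · -- C4c : n1 = 1 and (since m ≥ 4) n0 ≥ 3
        have hn11 : n1 = 1 := by omega
        obtain ⟨a, ha⟩ : ∃ a, n0 = 2 * a + 3 := ⟨(n0 - 3) / 2, by omega⟩
        obtain ⟨q, hq⟩ : ∃ q, a = 2 * q + 1 := ⟨a / 2, by omega⟩
        refine ⟨(fun vu => match vu with
          | ((true,false),(false,false)) => 1
          | ((true,false),(true,true)) => 1
          | ((false,true),(true,false)) => 1
          | ((true,false),(true,false)) => a
          | _ => 0),
          (fun p => match p with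
          | (false,false) => q + 1
          | (true,false) => 1
          | (false,true) => 1
          | (true,true) => q + 1), ?_, ?_, ?_, ?_, ?_⟩
        · simp only [Fintype.sum_prod_type, Fintype.sum_bool]; omega
        · rintro ⟨v1, v2⟩
          cases v1 <;> cases v2 <;>
            (simp only [Finset.sum_filter, Fintype.sum_prod_type, Fintype.sum_bool, nn]
             norm_num; try omega)
        · rintro ⟨p1, p2⟩
          cases p1 <;> cases p2 <;>
            (simp only [Finset.sum_filter, Fintype.sum_prod_type, Fintype.sum_bool]
             norm_num; try omega)
        · simp only [Finset.sum_filter, Fintype.sum_prod_type, Fintype.sum_bool]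
          norm_num; try omega
        · simp only [Fintype.sum_prod_type, Fintype.sum_bool]; omega
      · -- C4b : n1 ≥ 3
        obtain ⟨a, ha⟩ : ∃ a, n0 = 2 * a + 1 := ⟨n0 / 2, by omega⟩
        obtain ⟨b, hb⟩ : ∃ b, n1 = 2 * b + 3 := ⟨(n1 - 3) / 2, by omega⟩
        obtain ⟨q, hq⟩ : ∃ q, a + b = 2 * q + 1 := ⟨(a + b - 1) / 2, by omega⟩
        refine ⟨(fun vu => match vu with
          | ((false,true),(false,false)) => 1
          | ((false,true),(true,true)) => 1
          | ((true,false),(false,true)) => 1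
          | ((true,false),(true,false)) => a
          | ((false,true),(false,true)) => b
          | _ => 0),
          (fun p => match p with
          | (false,false) => q + 1
          | (true,false) => 1
          | (false,true) => 1
          | (true,true) => q + 1), ?_, ?_, ?_, ?_, ?_⟩
        · simp only [Fintype.sum_prod_type, Fintype.sum_bool]; omega
        · rintro ⟨v1, v2⟩
          cases v1 <;> cases v2 <;>
            (simp only [Finset.sum_filter, Fintype.sum_prod_type, Fintype.sum_bool, nn]
             norm_num; try omega)
        · rintro ⟨p1, p2⟩
          cases p1 <;> cases p2 <;>
            (simp only [Finset.sum_filter, Fintype.sum_prod_type, Fintype.sum_bool]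
             norm_num; try omega)
        · simp only [Finset.sum_filter, Fintype.sum_prod_type, Fintype.sum_bool]
          norm_num; try omega
        · simp only [Fintype.sum_prod_type, Fintype.sum_bool]; omega
    · -- C4a : s ≥ 3
      obtain ⟨k, hk⟩ : ∃ k, s = 2 * k + 3 := ⟨(s - 3) / 2, by omega⟩
      obtain ⟨a, ha⟩ : ∃ a, n0 = 2 * a + 1 := ⟨n0 / 2, by omega⟩
      obtain ⟨b, hb⟩ : ∃ b, n1 = 2 * b + 1 := ⟨n1 / 2, by omega⟩
      obtain ⟨q, hq⟩ : ∃ q, a + b = 2 * q := ⟨(a + b) / 2, by omega⟩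
      refine ⟨(fun vu => match vu with
        | ((false,false),(true,false)) => 1
        | ((false,false),(false,true)) => 1
        | ((false,false),(true,true)) => 1
        | ((false,false),(false,false)) => k
        | ((true,true),(true,true)) => k + 1
        | ((true,false),(true,false)) => a
        | ((false,true),(false,true)) => b
        | _ => 0),
        (fun p => match p with
        | (false,false) => k + 1 + q
        | (true,false) => 0
        | (false,true) => 2
        | (true,true) => k + 1 + q), ?_, ?_, ?_, ?_, ?_⟩
      · simp only [Fintype.sum_prod_type, Fintype.sum_bool]; omega
      · rintro ⟨v1, v2⟩
        cases v1 <;> cases v2 <;>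
          (simp only [Finset.sum_filter, Fintype.sum_prod_type, Fintype.sum_bool, nn]
           norm_num; try omega)
      · rintro ⟨p1, p2⟩
        cases p1 <;> cases p2 <;>
          (simp only [Finset.sum_filter, Fintype.sum_prod_type, Fintype.sum_bool]
           norm_num; try omega)
      · simp only [Finset.sum_filter, Fintype.sum_prod_type, Fintype.sum_bool]
        norm_num; try omega
      · simp only [Fintype.sum_prod_type, Fintype.sum_bool]; omega

end HC

namespace HC

variable {n : ℕ}

/-- the pair of booleans recording membership of the two `j`-slices of a cell in
`F = σ⁻¹ {u | u i = false}` -/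
def cF (σ : Perm (X n)) (i j : Fin n) : face j → K2 :=
  fun w => (!(σ w.val i), !(σ (Function.update w.val j true) i))

def sel (b : Bool) (p : K2) : Bool := cond b p.2 p.1

abbrev Zsub (j i : Fin n) := {x : X n // x j = false ∧ x i = false}

section Equivs
variable (i j : Fin n) (hij : j ≠ i)
include hij

def zOfW (w : face j) : Zsub j i :=
  ⟨Function.update w.val i false,
    by rw [Function.update_of_ne hij]; exact w.2, Function.update_self _ _ _⟩

def zOfV (v : face i) : Zsub j i :=
  ⟨Function.update v.val j false,
    Function.update_self _ _ _,
    by rw [Function.update_of_ne hij.symm]; exact v.2⟩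

def EWZ : face j ≃ Zsub j i × Bool where
  toFun w := (zOfW i j hij w, w.val i)
  invFun p := ⟨Function.update p.1.val i p.2,
    by rw [Function.update_of_ne hij]; exact p.1.2.1⟩
  left_inv w := by
    apply Subtype.ext
    simp only [zOfW, Function.update_idem, Function.update_eq_self]
  right_inv p := by
    obtain ⟨z, b⟩ := p
    simp only [Prod.mk.injEq]
    refine ⟨Subtype.ext ?_, Function.update_self _ _ _⟩
    simp only [zOfW, Function.update_idem]
    exact Function.update_eq_self_iff.mpr z.2.2.symm

def EVZ : face i ≃ Zsub j i × Bool where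
  toFun v := (zOfV i j hij v, v.val j)
  invFun p := ⟨Function.update p.1.val j p.2,
    by rw [Function.update_of_ne hij.symm]; exact p.1.2.2⟩
  left_inv v := by
    apply Subtype.ext
    simp only [zOfV, Function.update_idem, Function.update_eq_self]
  right_inv p := by
    obtain ⟨z, b⟩ := p
    simp only [Prod.mk.injEq]
    refine ⟨Subtype.ext ?_, Function.update_self _ _ _⟩
    simp only [zOfV, Function.update_idem]
    exact Function.update_eq_self_iff.mpr z.2.1.symm

end Equivs

theorem cnt_bool_total {α : Type*} [Fintype α] (f : α → Bool) :
    cnt f true + cnt f false = Fintype.card α := by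
  have := sum_cnt f
  rw [Fintype.sum_bool] at this
  rw [this]

/-- decoding membership through `cF` -/
theorem cF_decode (σ : Perm (X n)) (i j : Fin n) (w : face j) (b : Bool) :
    (!(σ (Function.update w.val j b) i)) = sel b (cF σ i j w) := by
  cases b
  · rw [upd_self w.2]; rfl
  · rfl

section Main

variable (σ : Perm (X n)) (i j : Fin n) (hij : j ≠ i) (hn : 4 ≤ n)

include hij in
/-- cardinality of the quarter cube -/
theorem card_Zsub : Fintype.card (Zsub j i) * 4 = Fintype.card (X n) := by
  have h1 : Fintype.card (X n) = 2 * Fintype.card (face j) :=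
    (Fintype.card_congr (faceEquiv j)).trans (by simp)
  have h2 : Fintype.card (face j) = Fintype.card (Zsub j i) * 2 :=
    (Fintype.card_congr (EWZ i j hij)).trans (by simp [mul_comm])
  omega

theorem card_X : Fintype.card (X n) = 2 ^ n := by
  simp [Fintype.card_fun]

theorem card_face (k : Fin n) : 2 * Fintype.card (face k) = 2 ^ n := by
  have h1 : Fintype.card (X n) = 2 * Fintype.card (face k) :=
    (Fintype.card_congr (faceEquiv k)).trans (by simp)
  rw [← h1, card_X]

theorem card_F (σ : Perm (X n)) (i : Fin n) :
    cnt (fun u : X n => !(σ u i)) true = Fintype.card (face i) := by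
  rw [cnt_eq_card_subtype]
  refine Fintype.card_congr ?_
  refine (Equiv.subtypeEquivRight fun u => ?_).trans (σ.subtypeEquiv fun u => Iff.rfl)
  cases h : σ u i <;> simp

/-- total of the slice counts of F, over the cells -/
theorem K2fact :
    (cnt (cF σ i j) (true, false) + cnt (cF σ i j) (true, true))
      + (cnt (cF σ i j) (false, true) + cnt (cF σ i j) (true, true))
      = Fintype.card (face i) := by
  have hfst : cnt (fun w => (cF σ i j w).1) true
      = cnt (cF σ i j) (true, false) + cnt (cF σ i j) (true, true) := by
    rw [cnt_comp (cF σ i j) Prod.fst true]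
    rw [show Finset.univ.filter (fun v : K2 => v.1 = true)
      = {((true : Bool), (false : Bool)), ((true : Bool), (true : Bool))} by decide]
    rw [Finset.sum_pair (by decide)]
  have hsnd : cnt (fun w => (cF σ i j w).2) true
      = cnt (cF σ i j) (false, true) + cnt (cF σ i j) (true, true) := by
    rw [cnt_comp (cF σ i j) Prod.snd true]
    rw [show Finset.univ.filter (fun v : K2 => v.2 = true)
      = {((false : Bool), (true : Bool)), ((true : Bool), (true : Bool))} by decide]
    rw [Finset.sum_pair (by decide)]
  rw [← hfst, ← hsnd, ← card_F σ i]
  have hX : cnt (fun u : X n => !(σ u i)) true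
      = cnt (fun p : Bool × face j => !(σ ((faceEquiv j).symm p) i)) true :=
    (cnt_equiv (faceEquiv j).symm (fun u : X n => !(σ u i)) true).symm
  rw [hX]
  have hswap : cnt (fun p : Bool × face j => !(σ ((faceEquiv j).symm p) i)) true
      = cnt (fun q : face j × Bool => !(σ ((faceEquiv j).symm (Equiv.prodComm _ _ q)) i)) true :=
    (cnt_equiv (Equiv.prodComm (face j) Bool) _ true).symm
  rw [hswap]
  have hpt : ∀ q : face j × Bool,
      (!(σ ((faceEquiv j).symm (Equiv.prodComm _ _ q)) i))
        = cond q.2 ((cF σ i j q.1).2) ((cF σ i j q.1).1) := by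
    rintro ⟨w, b⟩
    show (!(σ ((faceEquiv j).symm (b, w)) i)) = _
    have : (faceEquiv j).symm (b, w) = Function.update w.val j b := rfl
    rw [this]
    cases b
    · rw [upd_self w.2]; rfl
    · rfl
  rw [cnt_congr _ _ hpt, cnt_cond_prod (fun w => (cF σ i j w).1) (fun w => (cF σ i j w).2) true]

end Main

end HC

namespace HC

variable {n : ℕ}

/-- badness of a direction `j` (relative to `i` and `σ`) -/
def Bad (σ : Perm (X n)) (i j : Fin n) : Prop :=
  (cnt (cF σ i j) (true, true) = 0 ∧ cnt (cF σ i j) (true, false) % 2 = 1) ∨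
  (cnt (cF σ i j) (true, true) = 1 ∧
    (cnt (cF σ i j) (true, false) = 0 ∨ cnt (cF σ i j) (false, true) = 0))

set_option maxHeartbeats 1000000 in
theorem good_construction (σ : Perm (X n)) (i j : Fin n) (hij : j ≠ i) (hn : 4 ≤ n)
    (hbad : ¬ Bad σ i j) :
    ∃ σ1 ∈ AC i, ∃ π1 ∈ AC j, ∃ π2 ∈ AC j,
      Perm.sign (σ * π1 * σ1 * π2) = Perm.sign σ ∧
      ∀ x : X n, (σ * π1 * σ1 * π2) x i = x i := by
  classical
  set m := Fintype.card (Zsub j i) with hmdef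
  -- numeric facts about m
  have hc4 : m * 4 = 2 ^ n := by rw [← card_X (n := n)]; exact card_Zsub i j hij
  have hpow : (2:ℕ) ^ n = 2 ^ (n - 4) * 16 := by
    rw [show (16:ℕ) = 2^4 from rfl, ← pow_add, Nat.sub_add_cancel hn]
  have hp1 : 1 ≤ 2 ^ (n - 4) := Nat.one_le_two_pow
  have hm4 : 4 ≤ m := by omega
  have hme : m % 2 = 0 := by omega
  have hfacej : Fintype.card (face j) = 2 * m := by
    have := Fintype.card_congr (EWZ i j hij)
    simp only [Fintype.card_prod, Fintype.card_bool] at this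
    omega
  have hfacei : Fintype.card (face i) = 2 * m := by
    have := Fintype.card_congr (EVZ i j hij)
    simp only [Fintype.card_prod, Fintype.card_bool] at this
    omega
  -- the cell counts
  set s := cnt (cF σ i j) (true, true) with hs
  set n0 := cnt (cF σ i j) (true, false) with hn0
  set n1 := cnt (cF σ i j) (false, true) with hn1
  have hK2 : (n0 + s) + (n1 + s) = 2 * m := by
    rw [hn0, hs, hn1]; rw [K2fact σ i j, hfacei]
  have hK1 : cnt (cF σ i j) (false, false) + n0 + n1 + s = 2 * m := by
    have := sum_cnt (cF σ i j)
    rw [Fintype.sum_prod_type, Fintype.sum_bool] at this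
    simp only [Fintype.sum_bool] at this
    rw [hfacej] at this
    rw [hn0, hn1, hs]
    omega
  have hee : cnt (cF σ i j) (false, false) = s := by omega
  have hsum : s + s + n0 + n1 = 2 * m := by omega
  -- the numeric data
  have hb1 : ¬(s = 0 ∧ n0 % 2 = 1) := fun h => hbad (Or.inl h)
  have hb2 : ¬(s = 1 ∧ (n0 = 0 ∨ n1 = 0)) := fun h => hbad (Or.inr h)
  obtain ⟨c, d, hN1, hN2, hN3, hN4, hN5⟩ := numeric_core m s n0 n1 hm4 hme hsum hb1 hb2
  -- realize the joint distribution on Z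
  obtain ⟨fAB, hfAB⟩ := exists_fun_cnt (α := Zsub j i) c (by rw [hN1])
  set A : Zsub j i → K2 := fun z => (fAB z).1 with hA
  set B : Zsub j i → K2 := fun z => (fAB z).2 with hB
  obtain ⟨t, ht⟩ := exists_fun_cnt (α := Zsub j i) d (by rw [hN5])
  -- counts of A, B and derived maps
  have hcntA : ∀ v, cnt A v = ∑ vu ∈ univ.filter (fun vu : K2 × K2 => vu.1 = v), c vu := by
    intro v
    rw [hA]
    rw [cnt_comp fAB Prod.fst v]
    exact Finset.sum_congr rfl fun vu _ => hfAB vu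
  have hcntB : ∀ v, cnt B v = ∑ vu ∈ univ.filter (fun vu : K2 × K2 => vu.2 = v), c vu := by
    intro v
    rw [hB, cnt_comp fAB Prod.snd v]
    exact Finset.sum_congr rfl fun vu _ => hfAB vu
  have hcntAB1 : ∀ p, cnt (fun z => ((A z).1, (B z).1)) p
      = ∑ vu ∈ univ.filter (fun vu : K2 × K2 => (vu.1.1, vu.2.1) = p), c vu := by
    intro p
    rw [show (fun z => ((A z).1, (B z).1)) = (fun z => ((fun vu : K2 × K2 => (vu.1.1, vu.2.1)) (fAB z))) from rfl]
    rw [cnt_comp fAB (fun vu : K2 × K2 => (vu.1.1, vu.2.1)) p]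
    exact Finset.sum_congr rfl fun vu _ => hfAB vu
  have hcntAB2 : ∀ p, cnt (fun z => ((A z).2, (B z).2)) p
      = ∑ vu ∈ univ.filter (fun vu : K2 × K2 => (vu.1.2, vu.2.2) = p), c vu := by
    intro p
    rw [show (fun z => ((A z).2, (B z).2)) = (fun z => ((fun vu : K2 × K2 => (vu.1.2, vu.2.2)) (fAB z))) from rfl]
    rw [cnt_comp fAB (fun vu : K2 × K2 => (vu.1.2, vu.2.2)) p]
    exact Finset.sum_congr rfl fun vu _ => hfAB vu
  have hcntt1 : cnt (fun z => (t z).1) true = ∑ p ∈ univ.filter (fun p : K2 => p.1 = true), d p := by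
    rw [show (fun z => (t z).1) = (fun z => Prod.fst (t z)) from rfl, cnt_comp t Prod.fst true]
    exact Finset.sum_congr rfl fun p _ => ht p
  have hcntt2 : cnt (fun z => (t z).2) true = ∑ p ∈ univ.filter (fun p : K2 => p.2 = true), d p := by
    rw [show (fun z => (t z).2) = (fun z => Prod.snd (t z)) from rfl, cnt_comp t Prod.snd true]
    exact Finset.sum_congr rfl fun p _ => ht p
  -- construct e2
  set ρ : face j → Bool := fun w => sel (w.val i) (t (zOfW i j hij w)) with hρ
  have hρt : cnt ρ true = m := by
    have h1 : cnt ρ true = cnt (fun p : Zsub j i × Bool => ρ ((EWZ i j hij).symm p)) true :=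
      (cnt_equiv (EWZ i j hij).symm ρ true).symm
    have h2 : ∀ p : Zsub j i × Bool, ρ ((EWZ i j hij).symm p) = cond p.2 ((t p.1).2) ((t p.1).1) := by
      rintro ⟨z, b⟩
      have hz : zOfW i j hij ((EWZ i j hij).symm (z, b)) = z := congrArg Prod.fst ((EWZ i j hij).apply_symm_apply (z, b))
      have hbval : ((EWZ i j hij).symm (z, b)).val i = b := congrArg Prod.snd ((EWZ i j hij).apply_symm_apply (z, b))
      rw [hρ]
      simp only
      rw [hz, hbval]
      cases b <;> rfl
    rw [h1, cnt_congr _ _ h2, cnt_cond_prod (fun z => (t z).1) (fun z => (t z).2) true,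
      hcntt1, hcntt2, hN4]
  set fG : face j → Bool := fun w => !(w.val i) with hfG
  have hfGt : cnt fG true = m := by
    have h1 : cnt fG true = cnt (fun p : Zsub j i × Bool => fG ((EWZ i j hij).symm p)) true :=
      (cnt_equiv (EWZ i j hij).symm fG true).symm
    have h2 : ∀ p : Zsub j i × Bool, fG ((EWZ i j hij).symm p) = cond p.2 false true := by
      rintro ⟨z, b⟩
      have hbval : ((EWZ i j hij).symm (z, b)).val i = b := congrArg Prod.snd ((EWZ i j hij).apply_symm_apply (z, b))
      rw [hfG]; simp only [hbval]; cases b <;> rfl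
    rw [h1, cnt_congr _ _ h2, cnt_cond_prod (fun _ => (true : Bool)) (fun _ => (false : Bool)) true]
    have hT : cnt (fun _ : Zsub j i => (true : Bool)) true = m := by
      unfold cnt; rw [Finset.filter_true_of_mem (fun _ _ => rfl)]; exact Finset.card_univ
    have hF : cnt (fun _ : Zsub j i => (false : Bool)) true = 0 := by
      unfold cnt; rw [Finset.filter_false_of_mem (fun _ _ => by simp)]; rfl
    rw [hT, hF]
    omega
  have hcnt2 : ∀ v, cnt fG v = cnt ρ v := by
    intro v
    have htot1 := cnt_bool_total fG
    have htot2 := cnt_bool_total ρ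
    cases v
    · omega
    · rw [hρt, hfGt]
  obtain ⟨e2, he2sign, he2⟩ := exists_even_perm_comp fG ρ hcnt2
    (by rw [Fintype.card_bool, hfacej]; omega)
  -- construct h
  set tP : face i → K2 := fun v => t (zOfV i j hij v) with htP
  set P : face i → K2 := fun v =>
    (sel (v.val j) (A (zOfV i j hij v)), sel (v.val j) (B (zOfV i j hij v))) with hP
  have hcnth : ∀ p, cnt tP p = cnt P p := by
    intro p
    have h1 : cnt tP p = cnt (fun q : Zsub j i × Bool => tP ((EVZ i j hij).symm q)) p :=
      (cnt_equiv (EVZ i j hij).symm tP p).symm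
    have h2 : ∀ q : Zsub j i × Bool, tP ((EVZ i j hij).symm q) = t q.1 := by
      rintro ⟨z, b⟩
      have hz : zOfV i j hij ((EVZ i j hij).symm (z, b)) = z := congrArg Prod.fst ((EVZ i j hij).apply_symm_apply (z, b))
      rw [htP]; simp only [hz]
    have h3 : cnt P p = cnt (fun q : Zsub j i × Bool => P ((EVZ i j hij).symm q)) p :=
      (cnt_equiv (EVZ i j hij).symm P p).symm
    have h4 : ∀ q : Zsub j i × Bool, P ((EVZ i j hij).symm q)
        = cond q.2 ((A q.1).2, (B q.1).2) ((A q.1).1, (B q.1).1) := by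
      rintro ⟨z, b⟩
      have hz : zOfV i j hij ((EVZ i j hij).symm (z, b)) = z := congrArg Prod.fst ((EVZ i j hij).apply_symm_apply (z, b))
      have hbval : ((EVZ i j hij).symm (z, b)).val j = b := congrArg Prod.snd ((EVZ i j hij).apply_symm_apply (z, b))
      rw [hP]; simp only [hz, hbval]; cases b <;> rfl
    rw [h1, cnt_congr _ _ h2, cnt_fst_prod t p, ht p,
      h3, cnt_congr _ _ h4, cnt_cond_prod (fun z => ((A z).1, (B z).1)) (fun z => ((A z).2, (B z).2)) p,
      hcntAB1 p, hcntAB2 p, hN3 p]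
  obtain ⟨h, hhsign, hh⟩ := exists_even_perm_comp tP P hcnth
    (by rw [show Fintype.card K2 = 4 by simp, hfacei]; omega)
  -- construct e1
  set Q : face j → K2 := fun w =>
    cond (w.val i) (B (zOfW i j hij w)) (A (zOfW i j hij w)) with hQ
  have hcnt1 : ∀ v, cnt (cF σ i j) v = cnt Q v := by
    intro v
    have h1 : cnt Q v = cnt (fun p : Zsub j i × Bool => Q ((EWZ i j hij).symm p)) v :=
      (cnt_equiv (EWZ i j hij).symm Q v).symm
    have h2 : ∀ p : Zsub j i × Bool, Q ((EWZ i j hij).symm p) = cond p.2 (B p.1) (A p.1) := by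
      rintro ⟨z, b⟩
      have hz : zOfW i j hij ((EWZ i j hij).symm (z, b)) = z := congrArg Prod.fst ((EWZ i j hij).apply_symm_apply (z, b))
      have hbval : ((EWZ i j hij).symm (z, b)).val i = b := congrArg Prod.snd ((EWZ i j hij).apply_symm_apply (z, b))
      rw [hQ]; simp only [hz, hbval]
    have h5 : cnt (cF σ i j) v = nn s n0 n1 v := by
      obtain ⟨v1, v2⟩ := v
      cases v1 <;> cases v2
      · rw [hee]; rfl
      · rfl
      · rfl
      · rfl
    rw [h5, h1, cnt_congr _ _ h2, cnt_cond_prod A B v, hcntA v, hcntB v, hN2 v]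
  obtain ⟨e1, he1sign, he1⟩ := exists_even_perm_comp Q (cF σ i j) (fun v => (hcnt1 v).symm)
    (by rw [show Fintype.card K2 = 4 by simp, hfacej]; omega)
  -- assemble
  refine ⟨lift i h, lift_mem_AC i h hhsign, lift j e1, lift_mem_AC j e1 he1sign,
    lift j e2, lift_mem_AC j e2 he2sign, ?_, fun x => ?_⟩
  · rw [Perm.sign_mul, Perm.sign_mul, Perm.sign_mul, sign_lift, sign_lift, sign_lift]
    simp
  show σ (lift j e1 (lift i h (lift j e2 x))) i = x i
  -- pointwise properties of the constructed permutations
  have he1' : ∀ w : face j, cF σ i j (e1 w)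
      = cond (w.val i) (B (zOfW i j hij w)) (A (zOfW i j hij w)) := fun w => he1 w
  have he2' : ∀ w : face j, sel ((e2 w).val i) (t (zOfW i j hij (e2 w))) = (!(w.val i)) :=
    fun w => he2 w
  have hh' : ∀ v : face i,
      (sel ((h v).val j) (A (zOfV i j hij (h v))), sel ((h v).val j) (B (zOfV i j hij (h v))))
        = t (zOfV i j hij v) := fun v => hh v
  -- the pointwise computation
  set u : X n := lift j e2 x with hu
  set v1 : face i := h (proj i u) with hv1
  set s1 : X n := lift i h u with hs1
  have hs1eq : s1 = Function.update v1.val i (u i) := rfl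
  have goal1 : (!(σ (lift j e1 s1) i)) = sel (s1 j) (cF σ i j (e1 (proj j s1))) := by
    rw [← cF_decode σ i j (e1 (proj j s1)) (s1 j)]
    rfl
  have hprojs1i : (proj j s1).val i = u i := by
    rw [proj_val_apply_ne j i s1 hij.symm, hs1eq, Function.update_self]
  have hs1j : s1 j = v1.val j := by
    rw [hs1eq, Function.update_of_ne hij]
  have hzz : zOfW i j hij (proj j s1) = zOfV i j hij v1 := by
    apply Subtype.ext
    show Function.update (Function.update s1 j false) i false = Function.update v1.val j false
    rw [hs1eq, Function.update_comm hij.symm, Function.update_idem]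
    apply Function.update_eq_self_iff.mpr
    rw [Function.update_of_ne hij.symm]
    exact v1.2.symm
  have hztz : zOfV i j hij (proj i u) = zOfW i j hij (e2 (proj j x)) := by
    apply Subtype.ext
    show Function.update (Function.update u i false) j false
      = Function.update (e2 (proj j x)).val i false
    have huval : u = Function.update (e2 (proj j x)).val j (x j) := rfl
    rw [huval, Function.update_comm hij, Function.update_idem]
    apply Function.update_eq_self_iff.mpr
    rw [Function.update_of_ne hij]
    exact (e2 (proj j x)).2.symm
  have hui : u i = (e2 (proj j x)).val i := by
    show (Function.update (e2 (proj j x)).val j (x j)) i = _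
    rw [Function.update_of_ne hij.symm]
  have key : (!(σ (lift j e1 s1) i)) = (!(x i)) := by
    rw [goal1, he1' (proj j s1), hprojs1i, hzz, hs1j]
    have hstep : sel (v1.val j) (cond (u i) (B (zOfV i j hij v1)) (A (zOfV i j hij v1)))
        = sel (u i) (t (zOfV i j hij (proj i u))) := by
      conv_rhs => rw [← hh' (proj i u), ← hv1]
      cases u i <;> rfl
    rw [hstep, hztz, hui, he2' (proj j x), proj_val_apply_ne j i x hij.symm]
  have hgoal : σ (lift j e1 s1) i = x i := by
    have := congrArg Bool.not key
    simpa using this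
  exact hgoal

end HC

namespace HC

variable {n : ℕ}

theorem flipBit_apply_self (k : Fin n) (x : X n) : flipBit k x k = !(x k) :=
  Function.update_self _ _ _

theorem flipBit_apply_ne (k k' : Fin n) (x : X n) (h : k' ≠ k) : flipBit k x k' = x k' :=
  Function.update_of_ne h _ _

theorem flipBit_flipBit (k : Fin n) (x : X n) : flipBit k (flipBit k x) = x := by
  unfold flipBit
  rw [Function.update_self, Function.update_idem, Bool.not_not, Function.update_eq_self]

theorem cnt_eq_zero {α : Type*} [Fintype α] {κ : Type*} [DecidableEq κ]
    {f : α → κ} {v : κ} (h : cnt f v = 0) : ∀ a, f a ≠ v := by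
  intro a
  have := Finset.card_eq_zero.mp h
  rw [Finset.filter_eq_empty_iff] at this
  exact this (Finset.mem_univ a)

theorem filter_partition (p : X n → Prop) [DecidablePred p] (k : Fin n) :
    (Finset.univ.filter p).card
      = (Finset.univ.filter fun u => p u ∧ u k = false).card
        + (Finset.univ.filter fun u => p u ∧ u k = true).card := by
  rw [← Finset.card_filter_add_card_filter_not
    (s := Finset.univ.filter p) (p := fun u => u k = false), Finset.filter_filter,
    Finset.filter_filter]
  congr 2
  ext u
  simp [Bool.not_eq_false]

theorem filter_flip (p : X n → Prop) [DecidablePred p] (k : Fin n)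
    (hp : ∀ u, p (flipBit k u) ↔ p u) (c : Bool) :
    (Finset.univ.filter fun u : X n => p u ∧ u k = c).card
      = (Finset.univ.filter fun u => p u ∧ u k = !c).card := by
  refine Finset.card_bij' (fun u _ => flipBit k u) (fun u _ => flipBit k u) ?_ ?_ ?_ ?_
  · intro u hu
    simp only [Finset.mem_filter, Finset.mem_univ, true_and] at hu ⊢
    exact ⟨(hp u).mpr hu.1, by rw [flipBit_apply_self, hu.2]⟩
  · intro u hu
    simp only [Finset.mem_filter, Finset.mem_univ, true_and] at hu ⊢
    exact ⟨(hp u).mpr hu.1, by rw [flipBit_apply_self, hu.2, Bool.not_not]⟩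
  · intro u _; exact flipBit_flipBit k u
  · intro u _; exact flipBit_flipBit k u

theorem card_bit (k : Fin n) (b : Bool) :
    2 * (Finset.univ.filter fun u : X n => u k = b).card = 2 ^ n := by
  have h1 := filter_partition (fun _ : X n => True) k
  have h2 := filter_flip (fun _ : X n => True) k (fun _ => Iff.rfl) false
  have he : ∀ c : Bool, (Finset.univ.filter fun u : X n => True ∧ u k = c)
      = (Finset.univ.filter fun u : X n => u k = c) := by
    intro c; apply Finset.filter_congr; intro u _; simp
  rw [he, he] at h1
  rw [he, he] at h2
  rw [Finset.filter_true_of_mem (fun _ _ => trivial), Finset.card_univ, card_X] at h1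
  rw [show (!(false : Bool)) = true from rfl] at h2
  cases b <;>
    (generalize hA : (Finset.univ.filter fun u : X n => u k = false).card = a at h1 h2 ⊢
     generalize hB : (Finset.univ.filter fun u : X n => u k = true).card = c at h1 h2 ⊢
     try clear hA
     try clear hB
     omega)

theorem card_bit2 (k k' : Fin n) (h : k ≠ k') (b b' : Bool) :
    4 * (Finset.univ.filter fun u : X n => u k = b ∧ u k' = b').card = 2 ^ n := by
  have h1 := filter_partition (fun u : X n => u k = b) k'
  have h2 := filter_flip (fun u : X n => u k = b) k'
    (fun u => iff_of_eq (congrArg (fun t => t = b) (flipBit_apply_ne k' k u h))) b'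
  have h3 := card_bit k b
  cases b' <;> simp only [Bool.not_false, Bool.not_true] at h2 <;>
    (generalize hA : (Finset.univ.filter fun u : X n => u k = b).card = a0 at h1 h3 ⊢
     generalize hB : (Finset.univ.filter fun u : X n => u k = b ∧ u k' = false).card = a1 at h1 h2 ⊢
     generalize hC : (Finset.univ.filter fun u : X n => u k = b ∧ u k' = true).card = a2 at h1 h2 ⊢
     try clear hA
     try clear hB
     try clear hC
     omega)

theorem card_Fset (σ : Perm (X n)) (i : Fin n) :
    2 * (Finset.univ.filter fun u : X n => σ u i = false).card = 2 ^ n := by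
  have h1 : (Finset.univ.filter fun u : X n => σ u i = false).card
      = Fintype.card {u : X n // σ u i = false} := (Fintype.card_subtype _).symm
  have h2 : Fintype.card {u : X n // σ u i = false} = Fintype.card (face i) :=
    Fintype.card_congr (σ.subtypeEquiv fun u => Iff.rfl)
  rw [h1, h2, card_face]

theorem bridge1 (σ : Perm (X n)) (i j : Fin n) :
    cnt (cF σ i j) (true, false) + cnt (cF σ i j) (true, true)
      = (Finset.univ.filter fun u : X n => σ u i = false ∧ u j = false).card := by
  have hfst : cnt (fun w => (cF σ i j w).1) true
      = cnt (cF σ i j) (true, false) + cnt (cF σ i j) (true, true) := by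
    rw [cnt_comp (cF σ i j) Prod.fst true]
    rw [show Finset.univ.filter (fun v : K2 => v.1 = true)
      = {((true : Bool), (false : Bool)), ((true : Bool), (true : Bool))} by decide]
    rw [Finset.sum_pair (by decide)]
  rw [← hfst, cnt_eq_card_subtype, ← Fintype.card_subtype]
  refine Fintype.card_congr ?_
  refine Equiv.mk (fun w => ⟨w.val.val, ?_, w.val.2⟩)
    (fun u => ⟨⟨u.val, u.2.2⟩, ?_⟩) (fun w => ?_) (fun u => ?_)
  · have := w.2
    simpa [cF] using this
  · have := u.2.1
    simpa [cF] using this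
  · apply Subtype.ext; apply Subtype.ext; rfl
  · apply Subtype.ext; rfl

theorem bridge2 (σ : Perm (X n)) (i j : Fin n) :
    cnt (cF σ i j) (false, true) + cnt (cF σ i j) (true, true)
      = (Finset.univ.filter fun u : X n => σ u i = false ∧ u j = true).card := by
  have hsnd : cnt (fun w => (cF σ i j w).2) true
      = cnt (cF σ i j) (false, true) + cnt (cF σ i j) (true, true) := by
    rw [cnt_comp (cF σ i j) Prod.snd true]
    rw [show Finset.univ.filter (fun v : K2 => v.2 = true)
      = {((false : Bool), (true : Bool)), ((true : Bool), (true : Bool))} by decide]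
    rw [Finset.sum_pair (by decide)]
  rw [← hsnd, cnt_eq_card_subtype, ← Fintype.card_subtype]
  refine Fintype.card_congr ?_
  refine Equiv.mk
    (fun w => ⟨Function.update w.val.val j true, ?_, Function.update_self _ _ _⟩)
    (fun u => ⟨⟨Function.update u.val j false, Function.update_self _ _ _⟩, ?_⟩)
    (fun w => ?_) (fun u => ?_)
  · have := w.2
    simpa [cF] using this
  · have h1 : Function.update (Function.update u.val j false) j true = u.val := by
      rw [Function.update_idem]
      exact Function.update_eq_self_iff.mpr u.2.2.symm
    have := u.2.1
    simp only [cF]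
    rw [h1]
    simpa using this
  · apply Subtype.ext; apply Subtype.ext
    show Function.update (Function.update w.val.val j true) j false = w.val.val
    rw [Function.update_idem]
    exact Function.update_eq_self_iff.mpr w.val.2.symm
  · apply Subtype.ext
    show Function.update (Function.update u.val j false) j true = u.val
    rw [Function.update_idem]
    exact Function.update_eq_self_iff.mpr u.2.2.symm

theorem cF_balance (σ : Perm (X n)) (i j : Fin n) :
    cnt (cF σ i j) (false, false) = cnt (cF σ i j) (true, true) := by
  have hK1 := sum_cnt (cF σ i j)
  rw [Fintype.sum_prod_type] at hK1
  simp only [Fintype.sum_bool] at hK1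
  have hfj := card_face (n := n) j
  have hb1 := bridge1 σ i j
  have hb2 := bridge2 σ i j
  have hpart := filter_partition (fun u : X n => σ u i = false) j
  have hcF := card_Fset σ i
  generalize hA : (Finset.univ.filter fun u : X n => σ u i = false ∧ u j = false).card = a1 at hb1 hpart
  generalize hB : (Finset.univ.filter fun u : X n => σ u i = false ∧ u j = true).card = a2 at hb2 hpart
  generalize hC : (Finset.univ.filter fun u : X n => σ u i = false).card = a3 at hpart hcF
  clear hA hB hC
  omega

theorem antisym (σ : Perm (X n)) (i j : Fin n)
    (h0 : cnt (cF σ i j) (true, true) = 0) :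
    ∀ u : X n, σ u i = false ↔ ¬(σ (flipBit j u) i = false) := by
  have h1 : cnt (cF σ i j) (false, false) = 0 := by rw [cF_balance]; exact h0
  have key : ∀ a b : Bool, ((!a, !b) ≠ ((true : Bool), true)) →
      ((!a, !b) ≠ ((false : Bool), false)) → (a = false ↔ ¬(b = false)) := by decide
  intro u
  rcases Bool.dichotomy (u j) with hb | hb
  · set w : face j := ⟨u, hb⟩ with hw
    have hflip : flipBit j u = Function.update u j true := by
      unfold flipBit; rw [hb]; rfl
    have hcF : cF σ i j w = (!(σ u i), !(σ (Function.update u j true) i)) := rfl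
    have k1 := cnt_eq_zero h0 w
    have k2 := cnt_eq_zero h1 w
    rw [hcF] at k1 k2
    rw [hflip]
    exact key _ _ k1 k2
  · set w : face j := ⟨Function.update u j false, Function.update_self _ _ _⟩ with hw
    have hflip : flipBit j u = Function.update u j false := by
      unfold flipBit; rw [hb]; rfl
    have hup : Function.update (Function.update u j false) j true = u := by
      rw [Function.update_idem]
      exact Function.update_eq_self_iff.mpr hb.symm
    have hcF : cF σ i j w = (!(σ (Function.update u j false) i), !(σ u i)) := by
      simp only [cF, hw, hup]
    have k1 := cnt_eq_zero h0 w
    have k2 := cnt_eq_zero h1 w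
    rw [hcF] at k1 k2
    rw [hflip]
    have := key _ _ k1 k2
    tauto

theorem badA_badB (σ : Perm (X n)) (i : Fin n) (hn : 4 ≤ n) (j j' : Fin n) (hjj : j ≠ j')
    (hA : cnt (cF σ i j) (true, true) = 0)
    (hB : ∃ β : Bool, (Finset.univ.filter fun u : X n => σ u i = false ∧ u j' = β).card = 1) :
    False := by
  obtain ⟨β, hβ⟩ := hB
  have hanti := antisym σ i j hA
  have hbij : (Finset.univ.filter fun u : X n => σ u i = false ∧ u j' = β).card
      = (Finset.univ.filter fun u : X n => ¬(σ u i = false) ∧ u j' = β).card := by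
    refine Finset.card_bij' (fun u _ => flipBit j u) (fun u _ => flipBit j u) ?_ ?_ ?_ ?_
    · intro u hu
      simp only [Finset.mem_filter, Finset.mem_univ, true_and] at hu ⊢
      refine ⟨(hanti u).mp hu.1, ?_⟩
      rw [flipBit_apply_ne j j' u hjj.symm]; exact hu.2
    · intro u hu
      simp only [Finset.mem_filter, Finset.mem_univ, true_and] at hu ⊢
      constructor
      · by_contra h2
        exact hu.1 ((hanti u).mpr h2)
      · rw [flipBit_apply_ne j j' u hjj.symm]; exact hu.2
    · intro u _; exact flipBit_flipBit j u
    · intro u _; exact flipBit_flipBit j u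
  have hpart : (Finset.univ.filter fun u : X n => u j' = β).card
      = (Finset.univ.filter fun u : X n => σ u i = false ∧ u j' = β).card
        + (Finset.univ.filter fun u : X n => ¬(σ u i = false) ∧ u j' = β).card := by
    rw [← Finset.card_filter_add_card_filter_not
      (s := Finset.univ.filter fun u : X n => u j' = β) (p := fun u => σ u i = false),
      Finset.filter_filter, Finset.filter_filter]
    congr 2 <;> (ext u; simp only [Finset.mem_filter, Finset.mem_univ, true_and]; tauto)
  have hslice := card_bit (n := n) j' β
  have hpow : (2:ℕ) ^ n = 2 ^ (n - 4) * 16 := by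
    rw [show (16:ℕ) = 2^4 from rfl, ← pow_add, Nat.sub_add_cancel hn]
  have hp1 : 1 ≤ 2 ^ (n - 4) := Nat.one_le_two_pow
  generalize hA1 : (Finset.univ.filter fun u : X n => σ u i = false ∧ u j' = β).card = a1 at hβ hbij hpart
  generalize hA2 : (Finset.univ.filter fun u : X n => ¬(σ u i = false) ∧ u j' = β).card = a2 at hbij hpart
  generalize hA3 : (Finset.univ.filter fun u : X n => u j' = β).card = a3 at hpart hslice
  clear hA1 hA2 hA3
  omega

theorem badB_slice (σ : Perm (X n)) (i j : Fin n)
    (hB : cnt (cF σ i j) (true, true) = 1 ∧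
      (cnt (cF σ i j) (true, false) = 0 ∨ cnt (cF σ i j) (false, true) = 0)) :
    ∃ β : Bool, (Finset.univ.filter fun u : X n => σ u i = false ∧ u j = β).card = 1 := by
  obtain ⟨h1, h2 | h2⟩ := hB
  · exact ⟨false, by rw [← bridge1 σ i j, h1, h2]⟩
  · exact ⟨true, by rw [← bridge2 σ i j, h1, h2]⟩

theorem bad_unique (σ : Perm (X n)) (i : Fin n) (hn : 4 ≤ n) (j j' : Fin n) (hjj : j ≠ j')
    (hb : Bad σ i j) (hb' : Bad σ i j') : False := by
  have hpow : (2:ℕ) ^ n = 2 ^ (n - 4) * 16 := by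
    rw [show (16:ℕ) = 2^4 from rfl, ← pow_add, Nat.sub_add_cancel hn]
  have hp1 : 1 ≤ 2 ^ (n - 4) := Nat.one_le_two_pow
  rcases hb with ⟨hw0, hxodd⟩ | hBj
  · rcases hb' with ⟨hw0', hxodd'⟩ | hBj'
    · -- A & A
      have hanti := antisym σ i j hw0
      have hanti' := antisym σ i j' hw0'
      have hbij : (Finset.univ.filter fun u : X n => σ u i = false ∧ u j = false).card
          = (Finset.univ.filter fun u : X n => σ u i = false ∧ u j = true).card := by
        refine Finset.card_bij' (fun u _ => flipBit j (flipBit j' u))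
          (fun u _ => flipBit j' (flipBit j u)) ?_ ?_ ?_ ?_
        · intro u hu
          simp only [Finset.mem_filter, Finset.mem_univ, true_and] at hu ⊢
          constructor
          · have h1 : ¬(σ (flipBit j' u) i = false) := (hanti' u).mp hu.1
            by_contra h2
            exact h2 ((not_not.mp (fun h3 => h1 ((hanti (flipBit j' u)).mpr h3))))
          · rw [flipBit_apply_self, flipBit_apply_ne j' j u hjj, hu.2, Bool.not_false]
        · intro u hu
          simp only [Finset.mem_filter, Finset.mem_univ, true_and] at hu ⊢
          constructor
          · have h1 : ¬(σ (flipBit j u) i = false) := (hanti u).mp hu.1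
            by_contra h2
            exact h2 ((not_not.mp (fun h3 => h1 ((hanti' (flipBit j u)).mpr h3))))
          · rw [flipBit_apply_ne j' j _ hjj, flipBit_apply_self, hu.2, Bool.not_true]
        · intro u _
          show flipBit j' (flipBit j (flipBit j (flipBit j' u))) = u
          rw [flipBit_flipBit j (flipBit j' u), flipBit_flipBit j' u]
        · intro u _
          show flipBit j (flipBit j' (flipBit j' (flipBit j u))) = u
          rw [flipBit_flipBit j' (flipBit j u), flipBit_flipBit j u]
      have hb1 := bridge1 σ i j
      have hb2 := bridge2 σ i j
      have hpart := filter_partition (fun u : X n => σ u i = false) j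
      have hcF := card_Fset σ i
      generalize hA1 : (Finset.univ.filter fun u : X n => σ u i = false ∧ u j = false).card = a1 at hbij hb1 hpart
      generalize hA2 : (Finset.univ.filter fun u : X n => σ u i = false ∧ u j = true).card = a2 at hbij hb2 hpart
      generalize hA3 : (Finset.univ.filter fun u : X n => σ u i = false).card = a3 at hpart hcF
      clear hA1 hA2 hA3
      omega
    · exact badA_badB σ i hn j j' hjj hw0 (badB_slice σ i j' hBj')
  · rcases hb' with ⟨hw0', hxodd'⟩ | hBj'
    · exact badA_badB σ i hn j' j hjj.symm hw0' (badB_slice σ i j hBj)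
    · -- B & B
      obtain ⟨β, hβ⟩ := badB_slice σ i j hBj
      obtain ⟨β', hβ'⟩ := badB_slice σ i j' hBj'
      have hne : ∀ a b : Bool, a ≠ b → a = !b := by decide
      have hsub : (Finset.univ.filter fun u : X n => σ u i = false)
          ⊆ ((Finset.univ.filter fun u : X n => σ u i = false ∧ u j = β)
            ∪ ((Finset.univ.filter fun u : X n => σ u i = false ∧ u j' = β')
            ∪ (Finset.univ.filter fun u : X n => u j = !β ∧ u j' = !β'))) := by
        intro u hu
        simp only [Finset.mem_filter, Finset.mem_univ, true_and, Finset.mem_union] at hu ⊢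
        by_cases h1 : u j = β
        · exact Or.inl ⟨hu, h1⟩
        by_cases h2 : u j' = β'
        · exact Or.inr (Or.inl ⟨hu, h2⟩)
        · exact Or.inr (Or.inr ⟨hne _ _ h1, hne _ _ h2⟩)
      have hcard := Finset.card_le_card hsub
      have hu1 := Finset.card_union_le
        (Finset.univ.filter fun u : X n => σ u i = false ∧ u j = β)
        ((Finset.univ.filter fun u : X n => σ u i = false ∧ u j' = β')
            ∪ (Finset.univ.filter fun u : X n => u j = !β ∧ u j' = !β'))
      have hu2 := Finset.card_union_le
        (Finset.univ.filter fun u : X n => σ u i = false ∧ u j' = β')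
        (Finset.univ.filter fun u : X n => u j = !β ∧ u j' = !β')
      have hcap := card_bit2 j j' hjj (!β) (!β')
      have hcF := card_Fset σ i
      generalize hA1 : (Finset.univ.filter fun u : X n => σ u i = false).card = a1 at hcard hcF
      generalize hA2 : (Finset.univ.filter fun u : X n => σ u i = false ∧ u j = β).card = a2 at hβ hcard hu1
      generalize hA3 : (Finset.univ.filter fun u : X n => σ u i = false ∧ u j' = β').card = a3 at hβ' hcard hu1 hu2
      generalize hA4 : (Finset.univ.filter fun u : X n => u j = !β ∧ u j' = !β').card = a4 at hcard hu1 hu2 hcap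
      generalize hA5 : ((Finset.univ.filter fun u : X n => σ u i = false ∧ u j' = β')
            ∪ (Finset.univ.filter fun u : X n => u j = !β ∧ u j' = !β')).card = a5 at hcard hu1 hu2
      generalize hA6 : ((Finset.univ.filter fun u : X n => σ u i = false ∧ u j = β)
            ∪ ((Finset.univ.filter fun u : X n => σ u i = false ∧ u j' = β')
            ∪ (Finset.univ.filter fun u : X n => u j = !β ∧ u j' = !β'))).card = a6 at hcard hu1
      clear hA1 hA2 hA3 hA4 hA5 hA6
      omega

end HC

open Equiv

/-- Transforming an even permutation into an even controlled permutation using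
three concurrently even blocks: at least `n - 2` choices of `r₂` work. -/
theorem prop_new1_even (n : ℕ) (hn : 4 ≤ n) (r1 : Fin n)
    (σ : Perm (Fin n → Bool)) (hσ : Perm.sign σ = 1) :
    n - 2 ≤ Set.ncard {r2 : Fin n | r2 ≠ r1 ∧
      ∃ σ1 ∈ AC r1, ∃ π1 ∈ AC r2, ∃ π2 ∈ AC r2,
        Perm.sign (σ * π1 * σ1 * π2) = 1 ∧
        ∀ x, (σ * π1 * σ1 * π2) x r1 = x r1} := by
  classical
  set T : Set (Fin n) := {r2 : Fin n | r2 ≠ r1 ∧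
      ∃ σ1 ∈ AC r1, ∃ π1 ∈ AC r2, ∃ π2 ∈ AC r2,
        Perm.sign (σ * π1 * σ1 * π2) = 1 ∧
        ∀ x, (σ * π1 * σ1 * π2) x r1 = x r1} with hT
  have hgood : ∀ j : Fin n, j ≠ r1 → ¬ HC.Bad σ r1 j → j ∈ T := by
    intro j hj hb
    obtain ⟨σ1, hσ1, π1, hπ1, π2, hπ2, hsign, hctrl⟩ :=
      HC.good_construction σ r1 j hj hn hb
    exact ⟨hj, σ1, hσ1, π1, hπ1, π2, hπ2, by rw [hsign, hσ], hctrl⟩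
  set S : Finset (Fin n) := Finset.univ.filter (fun j => j ≠ r1 ∧ ¬ HC.Bad σ r1 j) with hS
  have hsub : (↑S : Set (Fin n)) ⊆ T := by
    intro j hj
    rw [Finset.mem_coe, hS, Finset.mem_filter] at hj
    exact hgood j hj.2.1 hj.2.2
  have hcard : n - 2 ≤ S.card := by
    have hcompl := Finset.card_filter_add_card_filter_not
      (s := (Finset.univ : Finset (Fin n)))
      (p := fun j : Fin n => j ≠ r1 ∧ ¬ HC.Bad σ r1 j)
    rw [Finset.card_univ, Fintype.card_fin] at hcompl
    have hneg : (Finset.univ.filter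
        (fun j : Fin n => ¬(j ≠ r1 ∧ ¬ HC.Bad σ r1 j))).card ≤ 2 := by
      by_cases hB : ∃ j0 : Fin n, HC.Bad σ r1 j0
      · obtain ⟨j0, hj0⟩ := hB
        have hss : (Finset.univ.filter
            (fun j : Fin n => ¬(j ≠ r1 ∧ ¬ HC.Bad σ r1 j))) ⊆ ({r1, j0} : Finset (Fin n)) := by
          intro j hj
          rw [Finset.mem_filter] at hj
          rw [Finset.mem_insert, Finset.mem_singleton]
          rcases not_and_or.mp hj.2 with h1 | h2
          · exact Or.inl (not_not.mp h1)
          · refine Or.inr ?_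
            by_contra hne
            exact HC.bad_unique σ r1 hn j j0 hne (not_not.mp h2) hj0
        exact le_trans (Finset.card_le_card hss)
          (le_trans (Finset.card_insert_le _ _) (by simp))
      · have hss : (Finset.univ.filter
            (fun j : Fin n => ¬(j ≠ r1 ∧ ¬ HC.Bad σ r1 j))) ⊆ ({r1} : Finset (Fin n)) := by
          intro j hj
          rw [Finset.mem_filter] at hj
          rw [Finset.mem_singleton]
          rcases not_and_or.mp hj.2 with h1 | h2
          · exact not_not.mp h1
          · exact absurd ⟨j, not_not.mp h2⟩ hB
        exact le_trans (Finset.card_le_card hss) (by simp)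
    rw [← hS] at hcompl
    generalize hA1 : S.card = a1 at hcompl ⊢
    generalize hA2 : (Finset.univ.filter
        (fun j : Fin n => ¬(j ≠ r1 ∧ ¬ HC.Bad σ r1 j))).card = a2 at hcompl hneg
    clear hA1 hA2
    omega
  calc n - 2 ≤ S.card := hcard
    _ = (↑S : Set (Fin n)).ncard := (Set.ncard_coe_finset S).symm
    _ ≤ T.ncard := Set.ncard_le_ncard hsub (Set.toFinite T)
end
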